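/- Let b_i = c_i (the i-th Catalan number) for all positive integers i. Then for all integers n, k with 1 ≤ k ≤ n, C^b(n,k) equals the Catalan triangle number B(n,k); equivalently, n · C^b(n,k) = k · binom(2n, n+k). -/

import Mathlib

open Finset

/-- Coefficient-style ballot number: `[x^m] C(x)^(r+1)` where `C` is the Catalan
generating function, given by `choose (2m+r) m - choose (2m+r) (m+r+1)`. -/
def EE (m r : ℕ) : ℤ := ((2*m+r).choose m : ℤ) - ((2*m+r).choose (m+r+1) : ℤ)

lemma EE_zero (r : ℕ) : EE 0 r = 1 := by
  simp [EE, Nat.choose_eq_zero_of_lt]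

lemma keyE (m r : ℕ) : EE (m+1) (r+1) = EE (m+1) r + EE m (r+2) := by
  unfold EE
  have e1 : 2*(m+1)+(r+1) = (2*m+r+2)+1 := by ring
  have e2 : 2*(m+1)+r = 2*m+r+2 := by ring
  have e3 : 2*m+(r+2) = 2*m+r+2 := by ring
  have e4 : (m+1)+(r+1)+1 = (m+r+2)+1 := by ring
  have e5 : (m+1)+r+1 = m+r+2 := by ring
  have e6 : m+(r+2)+1 = m+r+3 := by ring
  rw [e1, e2, e3, e4, e5, e6]
  have h1 : ((2*m+r+2)+1).choose (m+1) = (2*m+r+2).choose m + (2*m+r+2).choose (m+1) :=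
    Nat.choose_succ_succ _ _
  have h2 : ((2*m+r+2)+1).choose ((m+r+2)+1) = (2*m+r+2).choose (m+r+2) + (2*m+r+2).choose (m+r+3) :=
    Nat.choose_succ_succ _ _
  rw [h1, h2]
  push_cast
  ring

lemma EE_catalan (m : ℕ) : (catalan m : ℤ) = EE m 0 := by
  have hc := succ_mul_catalan_eq_centralBinom m
  have hch : (2*m).choose (m+1) * (m+1) = (2*m).choose m * m := by
    have := Nat.choose_succ_right_eq (2*m) m
    simpa [two_mul] using this
  have hm : ((m : ℤ)+1) ≠ 0 := by positivity
  apply mul_left_cancel₀ hm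
  unfold EE
  have : ((m:ℤ)+1) * (catalan m : ℤ) = ((2*m).choose m : ℤ) := by
    have := congrArg (Nat.cast (R := ℤ)) hc
    push_cast [Nat.centralBinom] at this
    linarith
  rw [this]
  have h2 : ((2*m).choose (m+1) : ℤ) * ((m:ℤ)+1) = ((2*m).choose m : ℤ) * m := by
    exact_mod_cast congrArg (Nat.cast (R := ℤ)) hch
  simp only [add_zero, Nat.add_zero]
  linarith

lemma EE_catalan_one (m : ℕ) : (catalan (m+1) : ℤ) = EE m 1 := by
  have hc := succ_mul_catalan_eq_centralBinom (m+1)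
  have hsym : (2*m+1).choose (m+1) = (2*m+1).choose m := by
    have h := Nat.choose_symm (n := 2*m+1) (k := m+1) (by omega)
    rw [show (2*m+1) - (m+1) = m by omega] at h
    exact h.symm
  have hch : (2*m+1).choose (m+2) * (m+2) = (2*m+1).choose (m+1) * m := by
    have := Nat.choose_succ_right_eq (2*m+1) (m+1)
    have h : 2*m+1 - (m+1) = m := by omega
    rw [h] at this
    simpa using this
  have hbin : (2*(m+1)).choose (m+1) = (2*m+1).choose m + (2*m+1).choose (m+1) := by
    have : 2*(m+1) = (2*m+1)+1 := by ring
    rw [this]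
    exact Nat.choose_succ_succ _ _
  have hm : ((m : ℤ)+2) ≠ 0 := by positivity
  apply mul_left_cancel₀ hm
  unfold EE
  have hl : ((m:ℤ)+2) * (catalan (m+1) : ℤ) = ((2*(m+1)).choose (m+1) : ℤ) := by
    have := congrArg (Nat.cast (R := ℤ)) hc
    push_cast [Nat.centralBinom] at this
    linarith
  rw [hl]
  have h2 : ((2*m+1).choose (m+2) : ℤ) * ((m:ℤ)+2) = ((2*m+1).choose (m+1) : ℤ) * m :=
    by exact_mod_cast congrArg (Nat.cast (R := ℤ)) hch
  have h3 : ((2*(m+1)).choose (m+1) : ℤ) = ((2*m+1).choose m : ℤ) + ((2*m+1).choose (m+1) : ℤ) :=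
    by exact_mod_cast congrArg (Nat.cast (R := ℤ)) hbin
  have h4 : ((2*m+1).choose (m+1) : ℤ) = ((2*m+1).choose m : ℤ) :=
    by exact_mod_cast congrArg (Nat.cast (R := ℤ)) hsym
  have : m+1+1 = m+2 := by ring
  rw [this]
  linear_combination h3 + h2 + ((m:ℤ)+1) * h4

/-- Convolution of two ballot-number sequences. -/
def Conv (m a b : ℕ) : ℤ := ∑ j ∈ range (m+1), EE j a * EE (m-j) b

lemma conv_a_succ (m a b : ℕ) : Conv (m+1) (a+1) b = Conv (m+1) a b + Conv m (a+2) b := by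
  unfold Conv
  rw [Finset.sum_range_succ' (fun j => EE j (a+1) * EE (m+1-j) b),
      Finset.sum_range_succ' (fun j => EE j a * EE (m+1-j) b)]
  simp only [Nat.succ_sub_succ, Nat.sub_zero, EE_zero]
  have h : ∀ j ∈ range (m+1), EE (j+1) (a+1) * EE (m-j) b
      = EE (j+1) a * EE (m-j) b + EE j (a+2) * EE (m-j) b := by
    intro j _
    rw [keyE j a]; ring
  rw [Finset.sum_congr rfl h, Finset.sum_add_distrib]
  ring

lemma conv_b_succ (m a b : ℕ) : Conv (m+1) a (b+1) = Conv (m+1) a b + Conv m a (b+2) := by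
  unfold Conv
  rw [Finset.sum_range_succ (fun j => EE j a * EE (m+1-j) (b+1)),
      Finset.sum_range_succ (fun j => EE j a * EE (m+1-j) b)]
  simp only [Nat.sub_self, EE_zero]
  have h : ∀ j ∈ range (m+1), EE j a * EE (m+1-j) (b+1)
      = EE j a * EE (m+1-j) b + EE j a * EE (m-j) (b+2) := by
    intro j hj
    rw [mem_range] at hj
    have hj' : m+1-j = (m-j)+1 := by omega
    rw [hj', keyE (m-j) b]; ring
  rw [Finset.sum_congr rfl h, Finset.sum_add_distrib]
  ring

lemma conv_eq : ∀ m a b : ℕ, Conv m a b = EE m (a+b+1) := by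
  intro m
  induction m using Nat.strong_induction_on with
  | _ m ih =>
    match m with
    | 0 =>
      intro a b
      simp [Conv, EE_zero]
    | (m+1) =>
      have base0 : ∀ b, Conv (m+1) 0 b = EE (m+1) (b+1) := by
        intro b
        induction b with
        | zero =>
          have : Conv (m+1) 0 0 = (catalan (m+2) : ℤ) := by
            unfold Conv
            rw [catalan_succ' (m+1)]
            rw [Nat.sum_antidiagonal_eq_sum_range_succ (fun x y => catalan x * catalan y) (m+1)]
            push_cast
            refine Finset.sum_congr rfl ?_
            intro j _
            rw [EE_catalan j, EE_catalan (m+1-j)]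
          rw [this, EE_catalan_one (m+1)]
        | succ b ihb =>
          rw [conv_b_succ, ihb, ih m (by omega) 0 (b+2), keyE m (b+1)]
          norm_num
      intro a
      induction a with
      | zero => intro b; rw [base0 b]; norm_num
      | succ a iha =>
        intro b
        rw [conv_a_succ, iha b, ih m (by omega) (a+2) b]
        have : a+1+b+1 = (a+b+1)+1 := by ring
        rw [this, keyE m (a+b+1)]
        congr 2
        omega

/-- The number of generalized compositions of `n` with `k` parts, where the part `i`
comes in `b i` types: the sum over all `k`-tuples of positive integers summing to `n`
of the product of the `b`-values of the parts. -/
def genComp (b : ℕ → ℕ) (n k : ℕ) : ℕ :=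
  ∑ f ∈ (Finset.Nat.antidiagonalTuple k n).filter (fun f => ∀ j, 0 < f j),
    ∏ j, b (f j)

/-- The total number of generalized compositions of `n` (with any number of parts). -/
def genCompAll (b : ℕ → ℕ) (n : ℕ) : ℕ :=
  ∑ k ∈ Finset.range (n + 1), genComp b n k

lemma genComp_eq_zero (b : ℕ → ℕ) {n k : ℕ} (h : n < k) : genComp b n k = 0 := by
  unfold genComp
  rw [Finset.sum_eq_zero]
  intro f hf
  rw [mem_filter, Finset.Nat.mem_antidiagonalTuple] at hf
  exfalso
  have hle : k ≤ ∑ j, f j := by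
    calc k = ∑ _j : Fin k, 1 := by simp
    _ ≤ ∑ j, f j := Finset.sum_le_sum (fun j _ => hf.2 j)
  omega

lemma genComp_one (b : ℕ → ℕ) (n : ℕ) (hn : 1 ≤ n) : genComp b n 1 = b n := by
  unfold genComp
  rw [Finset.Nat.antidiagonalTuple_one]
  rw [Finset.filter_singleton]
  have hpos : ∀ j : Fin 1, 0 < (![n] : Fin 1 → ℕ) j := by
    intro j
    fin_cases j
    exact hn
  rw [if_pos hpos]
  simp

lemma genComp_succ (b : ℕ → ℕ) (n k : ℕ) :
    genComp b n (k+1) = ∑ i ∈ range n, b (i+1) * genComp b (n - (i+1)) k := by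
  unfold genComp
  simp only [Finset.mul_sum]
  rw [Finset.sum_sigma']
  refine Finset.sum_nbij' (fun f => ⟨f 0 - 1, Fin.tail f⟩)
    (fun p => Fin.cons (p.1 + 1) p.2) ?_ ?_ ?_ ?_ ?_
  · -- hi : tuple ↦ sigma
    intro f hf
    simp only [mem_filter, Finset.Nat.mem_antidiagonalTuple] at hf
    obtain ⟨hsum, hpos⟩ := hf
    have h0 : 0 < f 0 := hpos 0
    have hle : f 0 ≤ n := by
      rw [← hsum, Fin.sum_univ_succ]; omega
    simp only [Finset.mem_sigma, mem_range, mem_filter,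
      Finset.Nat.mem_antidiagonalTuple]
    refine ⟨?_, ?_, ?_⟩
    · omega
    · have h1 : ∑ j : Fin (k+1), f j = f 0 + ∑ j, Fin.tail f j := by
        rw [Fin.sum_univ_succ]; rfl
      omega
    · intro j; exact hpos j.succ
  · -- hj : sigma ↦ tuple
    rintro ⟨i, f⟩ hp
    simp only [Finset.mem_sigma, mem_range, mem_filter,
      Finset.Nat.mem_antidiagonalTuple] at hp
    obtain ⟨hi, hsum, hpos⟩ := hp
    simp only [mem_filter, Finset.Nat.mem_antidiagonalTuple]
    refine ⟨?_, ?_⟩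
    · rw [Fin.sum_univ_succ]
      simp only [Fin.cons_zero, Fin.cons_succ]
      rw [hsum]
      omega
    · intro j
      refine Fin.cases ?_ ?_ j
      · simp
      · intro j'; simpa using hpos j'
  · -- left_inv
    intro f hf
    simp only [mem_filter, Finset.Nat.mem_antidiagonalTuple] at hf
    have h0 : 0 < f 0 := hf.2 0
    have h1 : f 0 - 1 + 1 = f 0 := by omega
    simp only [h1, Fin.cons_self_tail]
  · -- right_inv
    rintro ⟨i, f⟩ hp
    simp only [Fin.cons_zero, Fin.tail_cons]
    simp
  · -- values
    intro f hf
    simp only [mem_filter, Finset.Nat.mem_antidiagonalTuple] at hf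
    have h0 : 0 < f 0 := hf.2 0
    have h1 : f 0 - 1 + 1 = f 0 := by omega
    rw [Fin.prod_univ_succ]
    simp only [h1]
    rfl

lemma genComp_val (b : ℕ → ℕ) (hb : ∀ i, 1 ≤ i → b i = catalan i) :
    ∀ k n : ℕ, 1 ≤ k → k ≤ n → (genComp b n k : ℤ) = EE (n-k) (2*k-1) := by
  intro k
  induction k with
  | zero => intro n h; omega
  | succ k ihk =>
    intro n _ hkn
    rcases Nat.eq_zero_or_pos k with hk0 | hk1
    · subst hk0
      rw [genComp_one b n (by omega), hb n (by omega)]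
      have hn : n = (n-1)+1 := by omega
      rw [hn, EE_catalan_one (n-1)]
      norm_num
    · -- k ≥ 1
      rw [genComp_succ]
      push_cast
      set m := n - (k+1) with hm
      have hsub : range (n-k) ⊆ range n := Finset.range_subset_range.mpr (by omega)
      rw [← Finset.sum_subset hsub ?van]
      case van =>
        intro i hi hni
        rw [mem_range] at hi
        simp only [mem_range, not_lt] at hni
        rw [genComp_eq_zero b (by omega)]
        simp
      have hnk : n - k = m + 1 := by omega
      rw [hnk]
      have hterm : ∀ i ∈ range (m+1),
          ((b (i+1) : ℤ)) * (genComp b (n-(i+1)) k : ℤ) = EE i 1 * EE (m-i) (2*k-1) := by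
        intro i hi
        rw [mem_range] at hi
        rw [hb (i+1) (by omega), EE_catalan_one i]
        congr 1
        rw [ihk (n-(i+1)) hk1 (by omega)]
        congr 1
        omega
      rw [Finset.sum_congr rfl hterm]
      have := conv_eq m 1 (2*k-1)
      unfold Conv at this
      rw [this]
      congr 1
      omega

lemma final_identity (a c : ℕ) :
    ((a : ℤ)+c+1) * EE a (2*c+1) = ((c : ℤ)+1) * ((2*a+2*c+2).choose (a+2*c+2) : ℤ) := by
  have hE : EE a (2*c+1)
      = ((2*a+2*c+1).choose a : ℤ) - ((2*a+2*c+1).choose (a+2*c+2) : ℤ) := by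
    unfold EE
    congr 2 <;> omega
  have hsym : (2*a+2*c+1).choose a = (2*a+2*c+1).choose (a+2*c+1) := by
    have h := Nat.choose_symm (n := 2*a+2*c+1) (k := a+2*c+1) (by omega)
    rw [show (2*a+2*c+1) - (a+2*c+1) = a by omega] at h
    exact h
  have hch : (2*a+2*c+1).choose (a+2*c+2) * (a+2*c+2)
      = (2*a+2*c+1).choose (a+2*c+1) * a := by
    have := Nat.choose_succ_right_eq (2*a+2*c+1) (a+2*c+1)
    rw [show (2*a+2*c+1) - (a+2*c+1) = a by omega] at this
    simpa [show a+2*c+1+1 = a+2*c+2 by omega] using this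
  have hbin : (2*a+2*c+2).choose (a+2*c+2)
      = (2*a+2*c+1).choose (a+2*c+1) + (2*a+2*c+1).choose (a+2*c+2) := by
    have := Nat.choose_succ_succ (2*a+2*c+1) (a+2*c+1)
    simpa [show 2*a+2*c+1+1 = 2*a+2*c+2 by omega, show a+2*c+1+1 = a+2*c+2 by omega] using this
  have s1 : ((2*a+2*c+1).choose a : ℤ) = ((2*a+2*c+1).choose (a+2*c+1) : ℤ) :=
    by exact_mod_cast congrArg (Nat.cast (R := ℤ)) hsym
  have s2 : ((2*a+2*c+1).choose (a+2*c+2) : ℤ) * ((a:ℤ)+2*c+2)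
      = ((2*a+2*c+1).choose (a+2*c+1) : ℤ) * a :=
    by exact_mod_cast congrArg (Nat.cast (R := ℤ)) hch
  have s3 : ((2*a+2*c+2).choose (a+2*c+2) : ℤ)
      = ((2*a+2*c+1).choose (a+2*c+1) : ℤ) + ((2*a+2*c+1).choose (a+2*c+2) : ℤ) :=
    by exact_mod_cast congrArg (Nat.cast (R := ℤ)) hbin
  rw [hE]
  linear_combination ((a:ℤ)+(c:ℤ)+1) * s1 - s2 - ((c:ℤ)+1) * s3

theorem genComp_catalan (b : ℕ → ℕ) (hb : ∀ i, 1 ≤ i → b i = catalan i)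
    (n k : ℕ) (hk : 1 ≤ k) (hkn : k ≤ n) :
    n * genComp b n k = k * Nat.choose (2 * n) (n + k) := by
  have hval := genComp_val b hb k n hk hkn
  obtain ⟨c, rfl⟩ : ∃ c, k = c + 1 := ⟨k - 1, by omega⟩
  obtain ⟨a, rfl⟩ : ∃ a, n = a + (c + 1) := ⟨n - (c+1), by omega⟩
  have key : ((a : ℤ)+c+1) * (genComp b (a+(c+1)) (c+1) : ℤ)
      = ((c : ℤ)+1) * ((2*a+2*c+2).choose (a+2*c+2) : ℤ) := by
    rw [hval]
    rw [show a+(c+1)-(c+1) = a by omega, show 2*(c+1)-1 = 2*c+1 by omega]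
    exact final_identity a c
  have hcast : ((a+(c+1)) * genComp b (a+(c+1)) (c+1) : ℤ)
      = ((c+1) * Nat.choose (2*(a+(c+1))) ((a+(c+1))+(c+1)) : ℤ) := by
    push_cast
    rw [show (2*(a+(c+1))) = 2*a+2*c+2 by ring, show (a+(c+1))+(c+1) = a+2*c+2 by ring]
    calc ((a:ℤ)+(c+1)) * (genComp b (a+(c+1)) (c+1) : ℤ)
        = ((a : ℤ)+c+1) * (genComp b (a+(c+1)) (c+1) : ℤ) := by ring
      _ = ((c : ℤ)+1) * ((2*a+2*c+2).choose (a+2*c+2) : ℤ) := key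
      _ = ((c : ℤ)+1) * ((2*a+2*c+2).choose (a+2*c+2) : ℤ) := rfl
  exact_mod_cast hcast
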